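/- arXiv:2003.08323 — 2 statements merged into one kernel-verified Lean document; each statement's English description precedes it below -/
import Mathlib

section
/- If dr ∈ ℝ³ is a critical point of the normal curvature k_η restricted to the plane {v : ⟨η, v⟩ = 0} (in the sense of Lagrange multipliers, ∇k_η(dr) = λ·∇G(dr) with G(v) = ⟨η, v⟩), then dr satisfies the eigenvector equation 2⟨Dη·dr, dr⟩·dr − ⟨dr, dr⟩·(Dη + Dηᵀ)·dr + ⟨dr, dr⟩·⟨(Dη + Dηᵀ)·dr, η⟩·η = 0. -/
open Matrix

/-- The continuous linear map `u ↦ w ⬝ᵥ u`. -/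
noncomputable def dotCLM (w : Fin 3 → ℝ) : (Fin 3 → ℝ) →L[ℝ] ℝ :=
  ∑ i, w i • ContinuousLinearMap.proj i

lemma dotCLM_apply (w u : Fin 3 → ℝ) : dotCLM w u = w ⬝ᵥ u := by
  simp [dotCLM, dotProduct, ContinuousLinearMap.sum_apply]

lemma hasFDerivAt_dot (w : Fin 3 → ℝ) (x : Fin 3 → ℝ) :
    HasFDerivAt (fun v : Fin 3 → ℝ => w ⬝ᵥ v) (dotCLM w) x := by
  have : (fun v : Fin 3 → ℝ => w ⬝ᵥ v) = fun v => dotCLM w v := by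
    funext v; rw [dotCLM_apply]
  rw [this]
  exact (dotCLM w).hasFDerivAt

lemma hasFDerivAt_Q (A : Matrix (Fin 3) (Fin 3) ℝ) (x : Fin 3 → ℝ) :
    HasFDerivAt (fun v : Fin 3 → ℝ => A.mulVec v ⬝ᵥ v)
      (∑ i, ((A i ⬝ᵥ x) • ContinuousLinearMap.proj i + x i • dotCLM (A i))) x := by
  have : (fun v : Fin 3 → ℝ => A.mulVec v ⬝ᵥ v)
      = fun v => ∑ i, (A i ⬝ᵥ v) * v i := by
    funext v; simp [dotProduct, mulVec]
  rw [this]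
  apply HasFDerivAt.fun_sum
  intro i _
  exact (hasFDerivAt_dot (A i) x).mul ((ContinuousLinearMap.proj i :
    (Fin 3 → ℝ) →L[ℝ] ℝ).hasFDerivAt)

lemma hasFDerivAt_N (x : Fin 3 → ℝ) :
    HasFDerivAt (fun v : Fin 3 → ℝ => v ⬝ᵥ v) ((2 : ℝ) • dotCLM x) x := by
  have : (fun v : Fin 3 → ℝ => v ⬝ᵥ v) = fun v => ∑ i, v i * v i := by
    funext v; simp [dotProduct]
  rw [this]
  have h : HasFDerivAt (fun v : Fin 3 → ℝ => ∑ i, v i * v i)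
      (∑ i : Fin 3, (x i • (ContinuousLinearMap.proj i : (Fin 3 → ℝ) →L[ℝ] ℝ)
        + x i • ContinuousLinearMap.proj i)) x := by
    apply HasFDerivAt.fun_sum
    intro i _
    exact ((ContinuousLinearMap.proj i : (Fin 3 → ℝ) →L[ℝ] ℝ).hasFDerivAt).mul
      ((ContinuousLinearMap.proj i : (Fin 3 → ℝ) →L[ℝ] ℝ).hasFDerivAt)
  refine h.congr_fderiv ?_
  ext u
  simp [dotCLM, ContinuousLinearMap.sum_apply, Finset.mul_sum, two_mul, add_mul, mul_two, mul_comm]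

/-- A critical point (in the Lagrange multiplier sense) of the normal curvature restricted to
the plane `{v : ⟨η, v⟩ = 0}` satisfies the eigenvector equation. -/
theorem stmt_2 (η : Fin 3 → ℝ) (hη : η ⬝ᵥ η = 1) (A : Matrix (Fin 3) (Fin 3) ℝ)
    (dr : Fin 3 → ℝ) (hdr : dr ≠ 0) (htang : η ⬝ᵥ dr = 0)
    (kη : (Fin 3 → ℝ) → ℝ)
    (hk : ∀ v, kη v = -(A.mulVec v ⬝ᵥ v) / (v ⬝ᵥ v))
    (G : (Fin 3 → ℝ) → ℝ) (hG : ∀ v, G v = η ⬝ᵥ v)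
    (lagrange : ∃ l : ℝ, ∀ u, fderiv ℝ kη dr u = l * fderiv ℝ G dr u) :
    (2 * (A.mulVec dr ⬝ᵥ dr)) • dr - (dr ⬝ᵥ dr) • (A + Aᵀ).mulVec dr
      + ((dr ⬝ᵥ dr) * ((A + Aᵀ).mulVec dr ⬝ᵥ η)) • η = 0 := by
  obtain ⟨l, hl⟩ := lagrange
  set s : ℝ := dr ⬝ᵥ dr with hs_def
  set q : ℝ := A.mulVec dr ⬝ᵥ dr with hq_def
  have hs : s ≠ 0 := by
    rw [hs_def]
    intro h
    exact hdr (dotProduct_self_eq_zero.mp h)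
  -- derivative of kη
  have hkfun : kη = fun v => -(A.mulVec v ⬝ᵥ v) * (v ⬝ᵥ v)⁻¹ := by
    funext v; rw [hk v, div_eq_mul_inv]
  have hinv : HasFDerivAt (fun v : Fin 3 → ℝ => (v ⬝ᵥ v)⁻¹)
      ((-(s ^ 2)⁻¹) • ((2 : ℝ) • dotCLM dr)) dr := by
    exact (hasDerivAt_inv hs).comp_hasFDerivAt dr (hasFDerivAt_N dr)
  have hQ' := (hasFDerivAt_Q A dr).neg
  have hkder : HasFDerivAt kη
      ((-q) • ((-(s ^ 2)⁻¹) • ((2 : ℝ) • dotCLM dr))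
        + s⁻¹ • (-(∑ i, ((A i ⬝ᵥ dr) • ContinuousLinearMap.proj i
            + dr i • dotCLM (A i))))) dr := by
    rw [hkfun]
    exact hQ'.mul hinv
  have hGder : HasFDerivAt G (dotCLM η) dr := by
    have : G = fun v => η ⬝ᵥ v := funext hG
    rw [this]; exact hasFDerivAt_dot η dr
  -- clean scalar equation for every u
  have key2 : ∀ u : Fin 3 → ℝ,
      2 * q * (dr ⬝ᵥ u) - s * ((A + Aᵀ).mulVec dr ⬝ᵥ u) = l * s ^ 2 * (η ⬝ᵥ u) := by
    intro u
    have h1 := hl u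
    rw [hkder.fderiv, hGder.fderiv] at h1
    simp only [ContinuousLinearMap.add_apply, ContinuousLinearMap.smul_apply,
      ContinuousLinearMap.neg_apply, ContinuousLinearMap.sum_apply,
      ContinuousLinearMap.proj_apply, dotCLM_apply, smul_eq_mul, Fin.sum_univ_three] at h1
    simp only [dotProduct, mulVec, Matrix.add_apply, Matrix.transpose_apply,
      Fin.sum_univ_three] at h1 ⊢
    field_simp at h1
    apply mul_left_cancel₀ hs
    linear_combination s * h1
  -- determine l
  have hlval : l * s ^ 2 = -s * ((A + Aᵀ).mulVec dr ⬝ᵥ η) := by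
    have h := key2 η
    have hcomm : dr ⬝ᵥ η = 0 := by rwa [dotProduct_comm] at htang
    rw [hcomm, hη] at h
    linarith
  -- conclude componentwise
  funext j
  have h := key2 (Pi.single j 1)
  simp only [dotProduct_single, mul_one] at h
  rw [hlval] at h
  simp only [Pi.add_apply, Pi.sub_apply, Pi.smul_apply, Pi.zero_apply, smul_eq_mul]
  nlinarith [h, sq_nonneg s]
end

section
/- The η-principal direction equations are invariant under multiplication of the vector field by a nonvanishing scalar function: if f : ℝ³ → ℝ is a nonvanishing C¹ function and η is a C¹ vector field, then a nonzero vector dr with ⟨dr, η⟩ = 0 satisfies 2(D(fη)·dr, dr, fη) + ⟨curl(fη), fη⟩·⟨dr, dr⟩ = 0 if and only if it satisfies 2(Dη·dr, dr, η) + ⟨curl(η), η⟩·⟨dr, dr⟩ = 0. -/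
open Matrix

/-- The Jacobian matrix of a vector field on `ℝ³` at a point. -/
noncomputable def jac (X : (Fin 3 → ℝ) → (Fin 3 → ℝ)) (p : Fin 3 → ℝ) :
    Matrix (Fin 3) (Fin 3) ℝ :=
  Matrix.of fun i j => fderiv ℝ (fun q => X q i) p (Pi.single j 1)

/-- The curl of a vector field on `ℝ³` at a point. -/
noncomputable def curl (X : (Fin 3 → ℝ) → (Fin 3 → ℝ)) (p : Fin 3 → ℝ) : Fin 3 → ℝ :=
  ![jac X p 2 1 - jac X p 1 2, jac X p 0 2 - jac X p 2 0, jac X p 1 0 - jac X p 0 1]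

/-- The η-principal direction equation is invariant under multiplication of the vector field
by a nonvanishing scalar function `f`. -/
theorem stmt_6 (η : (Fin 3 → ℝ) → (Fin 3 → ℝ)) (f : (Fin 3 → ℝ) → ℝ)
    (hη : ContDiff ℝ 1 η) (hf : ContDiff ℝ 1 f) (hf0 : ∀ r, f r ≠ 0)
    (r dr : Fin 3 → ℝ) (hdr : dr ≠ 0) (htang : dr ⬝ᵥ η r = 0) :
    (2 * (fderiv ℝ (fun q => f q • η q) r dr ⬝ᵥ (dr ⨯₃ (f r • η r)))
        + (curl (fun q => f q • η q) r ⬝ᵥ (f r • η r)) * (dr ⬝ᵥ dr) = 0) ↔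
    (2 * (fderiv ℝ η r dr ⬝ᵥ (dr ⨯₃ η r)) + (curl η r ⬝ᵥ η r) * (dr ⬝ᵥ dr) = 0) := by
  have hfd : Differentiable ℝ f := hf.differentiable one_ne_zero
  have hηd : Differentiable ℝ η := hη.differentiable one_ne_zero
  have hηdi : ∀ i, Differentiable ℝ fun q => η q i := fun i => differentiable_pi.mp hηd i
  set g : Fin 3 → ℝ := fun j => fderiv ℝ f r (Pi.single j 1) with hg
  have hsmul : fderiv ℝ (fun q => f q • η q) r dr
      = fderiv ℝ f r dr • η r + f r • fderiv ℝ η r dr := by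
    rw [fderiv_fun_smul (hfd r) (hηd r)]
    simp [ContinuousLinearMap.add_apply]
    abel
  have hjac : ∀ i j, jac (fun q => f q • η q) r i j
      = g j * η r i + f r * jac η r i j := by
    intro i j
    have : (fun q => (f q • η q) i) = fun q => f q * η q i := by
      funext q; simp
    simp only [jac, Matrix.of_apply, this]
    rw [fderiv_fun_mul (hfd r) ((hηdi i) r)]
    simp [jac, hg]; ring
  have hcurl : curl (fun q => f q • η q) r = g ⨯₃ η r + f r • curl η r := by
    funext k
    fin_cases k <;>
      simp [curl, hjac, cross_apply] <;> ring
  have key : 2 * (fderiv ℝ (fun q => f q • η q) r dr ⬝ᵥ (dr ⨯₃ (f r • η r)))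
        + (curl (fun q => f q • η q) r ⬝ᵥ (f r • η r)) * (dr ⬝ᵥ dr)
      = f r ^ 2 * (2 * (fderiv ℝ η r dr ⬝ᵥ (dr ⨯₃ η r))
        + (curl η r ⬝ᵥ η r) * (dr ⬝ᵥ dr)) := by
    rw [hsmul, hcurl]
    simp only [cross_apply, dotProduct, Fin.sum_univ_three, Pi.add_apply, Pi.smul_apply,
      smul_eq_mul, Matrix.cons_val_zero, Matrix.cons_val_one, Matrix.head_cons,
      Matrix.cons_val_two, Matrix.tail_cons]
    ring
  rw [key, mul_eq_zero]
  simp [pow_eq_zero_iff, hf0 r]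
end
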